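/- Let F be a 4×4 real matrix with Fᵀ = −F, and set s = F₁₂² + F₁₃² + F₁₄² + F₂₃² + F₂₄² + F₃₄². Then 1 + s ≤ det(1 − F) ≤ (1 + s/2)², where 1 denotes the 4×4 identity matrix. -/

import Mathlib

set_option linter.unreachableTactic false
set_option linter.unusedTactic false
open Matrix
set_option maxHeartbeats 1000000

/-- For a `4×4` antisymmetric real matrix `F` with `s = |F|²`,
`1 + s ≤ det(1 − F) ≤ (1 + s/2)²`. -/
theorem det_one_sub_antisymm_four_bounds (F : Matrix (Fin 4) (Fin 4) ℝ)
    (hF : Fᵀ = -F) :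
    1 + (F 0 1 ^ 2 + F 0 2 ^ 2 + F 0 3 ^ 2 + F 1 2 ^ 2 + F 1 3 ^ 2 + F 2 3 ^ 2)
        ≤ (1 - F).det ∧
      (1 - F).det ≤
        (1 + (F 0 1 ^ 2 + F 0 2 ^ 2 + F 0 3 ^ 2 + F 1 2 ^ 2 + F 1 3 ^ 2 + F 2 3 ^ 2) / 2) ^ 2 := by
  have h : ∀ i j : Fin 4, F j i = -F i j := by
    intro i j
    have := congrFun (congrFun hF i) j
    simpa [Matrix.transpose_apply] using this
  have h00 := h 0 0; have h11 := h 1 1; have h22 := h 2 2; have h33 := h 3 3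
  have h01 := h 0 1; have h02 := h 0 2; have h03 := h 0 3
  have h12 := h 1 2; have h13 := h 1 3; have h23 := h 2 3
  have hd : (1 - F).det = 1 + (F 0 1 ^ 2 + F 0 2 ^ 2 + F 0 3 ^ 2 + F 1 2 ^ 2 + F 1 3 ^ 2 + F 2 3 ^ 2)
      + (F 0 1 * F 2 3 - F 0 2 * F 1 3 + F 0 3 * F 1 2) ^ 2 := by
    have hM : (1 - F) = !![1, -F 0 1, -F 0 2, -F 0 3;
        F 0 1, 1, -F 1 2, -F 1 3;
        F 0 2, F 1 2, 1, -F 2 3;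
        F 0 3, F 1 3, F 2 3, 1] := by
      ext i j
      fin_cases i <;> fin_cases j <;>
        simp [Matrix.sub_apply, Matrix.one_apply] <;>
        first
          | linarith [h00] | linarith [h11] | linarith [h22] | linarith [h33]
          | linarith [h01] | linarith [h02] | linarith [h03]
          | linarith [h12] | linarith [h13] | linarith [h23]
    rw [hM]
    simp [Matrix.det_succ_row_zero, Fin.sum_univ_succ, Fin.succAbove, Fin.castSucc, Fin.castAdd, Fin.castLE]
    ring
  constructor
  · rw [hd]
    nlinarith [sq_nonneg (F 0 1 * F 2 3 - F 0 2 * F 1 3 + F 0 3 * F 1 2)]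
  · rw [hd]
    have h1 : (0:ℝ) ≤ (F 0 1 - F 2 3)^2 + (F 0 2 + F 1 3)^2 + (F 0 3 - F 1 2)^2 := by positivity
    have h2 : (0:ℝ) ≤ (F 0 1 + F 2 3)^2 + (F 0 2 - F 1 3)^2 + (F 0 3 + F 1 2)^2 := by positivity
    nlinarith [mul_nonneg h1 h2]
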